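/- Let G be a simple graph with degree sequence x_1 ≥ x_2 ≥ ⋯ ≥ x_n (arranged in decreasing order). Then the number of paths of length 4 in G is at most Σ_{1 ≤ i < j ≤ n} x_i x_j². -/

import Mathlib

set_option linter.unusedSectionVars false

open SimpleGraph

lemma walk4 {V : Type*} {G : SimpleGraph V} {u v : V} (p : G.Walk u v) (hl : p.length = 4) :
    ∃ (a b c : V) (h1 : G.Adj u a) (h2 : G.Adj a b) (h3 : G.Adj b c) (h4 : G.Adj c v),
      p = .cons h1 (.cons h2 (.cons h3 (.cons h4 .nil))) := by
  cases p with
  | nil => simp at hl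
  | cons h1 p =>
    cases p with
    | nil => simp at hl
    | cons h2 p =>
      cases p with
      | nil => simp at hl
      | cons h3 p =>
        cases p with
        | nil => simp at hl
        | cons h4 p =>
          cases p with
          | nil => exact ⟨_, _, _, h1, h2, h3, h4, rfl⟩
          | cons h5 p => simp at hl

section
variable {V : Type*} [Fintype V] [DecidableEq V] (G : SimpleGraph V) [DecidableRel G.Adj]

def Sfin : Finset (V × V × V × V × V) :=
  Finset.univ.filter fun t => t.2.1 ≠ t.2.2.2.1 ∧ G.Adj t.1 t.2.1 ∧ G.Adj t.2.1 t.2.2.1 ∧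
    G.Adj t.2.2.1 t.2.2.2.1 ∧ G.Adj t.2.2.2.1 t.2.2.2.2

noncomputable def fmap (t : {p : Σ u v : V, G.Walk u v // p.2.2.IsPath ∧ p.2.2.length = 4}) :
    V × V × V × V × V :=
  (t.1.1, t.1.2.2.support.getD 1 t.1.1, t.1.2.2.support.getD 2 t.1.1,
    t.1.2.2.support.getD 3 t.1.1, t.1.2.1)

lemma fmap_mem (t : {p : Σ u v : V, G.Walk u v // p.2.2.IsPath ∧ p.2.2.length = 4}) :
    fmap G t ∈ Sfin G := by
  obtain ⟨⟨u, v, p⟩, hp, hl⟩ := t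
  obtain ⟨a, b, c, h1, h2, h3, h4, rfl⟩ := walk4 p hl
  simp only [Walk.isPath_def, Walk.support_cons, Walk.support_nil] at hp
  simp_all [fmap, Sfin, Walk.support_cons]

lemma fmap_inj : Function.Injective (fmap G (V := V)) := by
  rintro ⟨⟨u, v, p⟩, hp, hl⟩ ⟨⟨u', v', p'⟩, hp', hl'⟩ h
  obtain ⟨a, b, c, h1, h2, h3, h4, rfl⟩ := walk4 p hl
  obtain ⟨a', b', c', h1', h2', h3', h4', rfl⟩ := walk4 p' hl'
  simp only [fmap, Walk.support_cons, Walk.support_nil, Prod.mk.injEq,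
    List.getD_cons_succ, List.getD_cons_zero] at h
  obtain ⟨rfl, rfl, rfl, rfl, rfl⟩ := h
  rfl

lemma Sfin_card_le : (Sfin G).card ≤ ∑ a : V, ∑ b : V,
    if a = b then 0 else G.degree a * G.degree b * min (G.degree a) (G.degree b) := by
  classical
  rw [Finset.card_eq_sum_card_fiberwise
    (f := fun t : V × V × V × V × V => (t.2.1, t.2.2.2.1)) (t := Finset.univ)
    (fun _ _ => Finset.mem_univ _)]
  rw [← Finset.univ_product_univ, Finset.sum_product]
  refine Finset.sum_le_sum fun a _ => Finset.sum_le_sum fun b _ => ?_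
  by_cases hab : a = b
  · subst hab
    rw [if_pos rfl]
    simp only [Nat.le_zero, Finset.card_eq_zero, Finset.eq_empty_iff_forall_notMem]
    rintro t ht
    simp only [Sfin, Finset.mem_filter, Prod.mk.injEq] at ht
    obtain ⟨⟨-, hne, -⟩, h1, h2⟩ := ht
    exact hne (h1.trans h2.symm)
  · rw [if_neg hab]
    have hsub : ((Sfin G).filter fun t => (t.2.1, t.2.2.2.1) = (a, b)).card ≤
        ((G.neighborFinset a) ×ˢ ((G.neighborFinset a ∩ G.neighborFinset b) ×ˢ
          (G.neighborFinset b))).card := by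
      apply Finset.card_le_card_of_injOn (fun t => (t.1, t.2.2.1, t.2.2.2.2))
      · rintro ⟨v0, v1, v2, v3, v4⟩ ht
        simp only [Finset.mem_coe, Sfin, Finset.mem_filter, Prod.mk.injEq, Finset.mem_univ, true_and] at ht
        obtain ⟨⟨hne, h1, h2, h3, h4⟩, rfl, rfl⟩ := ht
        simp only [Finset.mem_coe, Finset.mem_product, Finset.mem_inter, mem_neighborFinset]
        exact ⟨h1.symm, ⟨h2, h3.symm⟩, h4⟩
      · rintro ⟨v0, v1, v2, v3, v4⟩ ht ⟨w0, w1, w2, w3, w4⟩ ht' h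
        simp only [Finset.mem_coe, Finset.mem_filter, Prod.mk.injEq] at ht ht'
        obtain ⟨-, rfl, rfl⟩ := ht
        obtain ⟨-, rfl, rfl⟩ := ht'
        simp only [Prod.mk.injEq] at h
        obtain ⟨rfl, rfl, rfl⟩ := h
        rfl
    refine hsub.trans ?_
    rw [Finset.card_product, Finset.card_product, card_neighborFinset_eq_degree,
      card_neighborFinset_eq_degree]
    have hm : (G.neighborFinset a ∩ G.neighborFinset b).card ≤ min (G.degree a) (G.degree b) := by
      refine le_min ?_ ?_
      · rw [← card_neighborFinset_eq_degree]
        exact Finset.card_le_card Finset.inter_subset_left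
      · rw [← card_neighborFinset_eq_degree]
        exact Finset.card_le_card Finset.inter_subset_right
    calc G.degree a * ((G.neighborFinset a ∩ G.neighborFinset b).card * G.degree b)
        ≤ G.degree a * (min (G.degree a) (G.degree b) * G.degree b) :=
          Nat.mul_le_mul le_rfl (Nat.mul_le_mul hm le_rfl)
      _ = G.degree a * G.degree b * min (G.degree a) (G.degree b) := by ring
end

lemma xanti (x : ℕ → ℕ) (n : ℕ) (hdec : ∀ i, 1 ≤ i → i < n → x (i + 1) ≤ x i) :
    ∀ i j, 1 ≤ i → i ≤ j → j ≤ n → x j ≤ x i := by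
  intro i j hi hij hjn
  induction j with
  | zero => omega
  | succ k ih =>
    rcases Nat.eq_or_lt_of_le hij with h | h
    · rw [h]
    · exact (hdec k (by omega) (by omega)).trans (ih (by omega) (by omega))

lemma double_count (n : ℕ) (x : ℕ → ℕ) (hdec : ∀ i, 1 ≤ i → i < n → x (i + 1) ≤ x i) :
    (∑ i ∈ Finset.range n, ∑ j ∈ Finset.range n,
      if i = j then 0 else x (i+1) * x (j+1) * min (x (i+1)) (x (j+1))) =
    2 * ∑ i ∈ Finset.range n, ∑ j ∈ Finset.range n,
      if i < j then x (i+1) * x (j+1) ^ 2 else 0 := by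
  have key : ∀ i ∈ Finset.range n, ∀ j ∈ Finset.range n, i < j →
      x (i+1) * x (j+1) * min (x (i+1)) (x (j+1)) = x (i+1) * x (j+1) ^ 2 := by
    intro i hi j hj hij
    rw [min_eq_right (xanti x n hdec (i+1) (j+1) (by omega) (by omega)
      (by simp at hj; omega))]
    ring
  have split : (∑ i ∈ Finset.range n, ∑ j ∈ Finset.range n,
      if i = j then 0 else x (i+1) * x (j+1) * min (x (i+1)) (x (j+1))) =
      (∑ i ∈ Finset.range n, ∑ j ∈ Finset.range n,
        if i < j then x (i+1) * x (j+1) * min (x (i+1)) (x (j+1)) else 0) +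
      (∑ i ∈ Finset.range n, ∑ j ∈ Finset.range n,
        if j < i then x (i+1) * x (j+1) * min (x (i+1)) (x (j+1)) else 0) := by
    rw [← Finset.sum_add_distrib]
    refine Finset.sum_congr rfl fun i _ => ?_
    rw [← Finset.sum_add_distrib]
    refine Finset.sum_congr rfl fun j _ => ?_
    rcases lt_trichotomy i j with h | rfl | h
    · simp [h, h.ne, Nat.lt_asymm h]
    · simp
    · simp [h, h.ne', Nat.lt_asymm h]
  rw [split, two_mul]
  congr 1
  · refine Finset.sum_congr rfl fun i hi => Finset.sum_congr rfl fun j hj => ?_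
    by_cases h : i < j
    · simp only [if_pos h, key i hi j hj h]
    · simp [h]
  · rw [Finset.sum_comm]
    refine Finset.sum_congr rfl fun i hi => Finset.sum_congr rfl fun j hj => ?_
    by_cases h : i < j
    · rw [if_pos h, if_pos h, ← key i hi j hj h]
      rw [mul_comm (x (j+1)) (x (i+1)), min_comm]
    · simp [h]

/-- If `x_1 ≥ x_2 ≥ ⋯ ≥ x_n` is the degree sequence of a simple graph `G` arranged in
decreasing order, then the number of (unordered) paths of length 4 in `G` is at most
`Σ_{1 ≤ i < j ≤ n} x_i x_j²`.  Here paths are counted as walks which are paths of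
length 4; each unordered path corresponds to exactly two such walks, whence the
division by 2. -/
theorem stmt_18 {V : Type*} [Fintype V] (G : SimpleGraph V) [DecidableRel G.Adj]
    (n : ℕ) (hn : Fintype.card V = n) (x : ℕ → ℕ)
    (hdec : ∀ i, 1 ≤ i → i < n → x (i + 1) ≤ x i)
    (e : V ≃ Fin n) (hdeg : ∀ v : V, G.degree v = x ((e v : ℕ) + 1)) :
    (Nat.card {p : Σ u v : V, G.Walk u v // p.2.2.IsPath ∧ p.2.2.length = 4} : ℝ) / 2 ≤
      ∑ i ∈ Finset.Icc 1 n, ∑ j ∈ Finset.Icc 1 n,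
        if i < j then (x i : ℝ) * (x j : ℝ) ^ 2 else 0 := by
  classical
  set P := {p : Σ u v : V, G.Walk u v // p.2.2.IsPath ∧ p.2.2.length = 4}
  -- Step 1: Nat.card P ≤ (Sfin G).card
  have ginj : Function.Injective
      (fun t : P => (⟨fmap G t, fmap_mem G t⟩ : ↥(Sfin G))) := by
    intro a b h
    exact fmap_inj G (congrArg Subtype.val h)
  have : Finite P := Finite.of_injective _ ginj
  have h1 : Nat.card P ≤ (Sfin G).card := by
    calc Nat.card P ≤ Nat.card ↥(Sfin G) := Nat.card_le_card_of_injective _ ginj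
      _ = (Sfin G).card := Nat.card_eq_finsetCard _
  -- Step 2: reindex degree sum
  have h2 : (∑ a : V, ∑ b : V,
        if a = b then 0 else G.degree a * G.degree b * min (G.degree a) (G.degree b)) =
      ∑ i ∈ Finset.range n, ∑ j ∈ Finset.range n,
        if i = j then 0 else x (i+1) * x (j+1) * min (x (i+1)) (x (j+1)) := by
    have step1 : (∑ a : V, ∑ b : V,
        if a = b then 0 else G.degree a * G.degree b * min (G.degree a) (G.degree b)) =
        ∑ i : Fin n, ∑ j : Fin n,
          if (i : ℕ) = (j : ℕ) then 0 else x ((i : ℕ)+1) * x ((j : ℕ)+1) *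
            min (x ((i : ℕ)+1)) (x ((j : ℕ)+1)) := by
      refine Fintype.sum_equiv e _ _ fun a => ?_
      refine Fintype.sum_equiv e _ _ fun b => ?_
      have hiff : a = b ↔ ((e a : ℕ) = (e b : ℕ)) := by
        rw [Fin.val_eq_val, Equiv.apply_eq_iff_eq]
      simp only [hdeg, hiff]
    calc (∑ a : V, ∑ b : V,
        if a = b then 0 else G.degree a * G.degree b * min (G.degree a) (G.degree b))
        = ∑ i : Fin n, ∑ j : Fin n,
          if (i : ℕ) = (j : ℕ) then 0 else x ((i : ℕ)+1) * x ((j : ℕ)+1) *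
            min (x ((i : ℕ)+1)) (x ((j : ℕ)+1)) := step1
      _ = ∑ i : Fin n, ∑ j ∈ Finset.range n,
          if (i : ℕ) = j then 0 else x ((i : ℕ)+1) * x (j+1) *
            min (x ((i : ℕ)+1)) (x (j+1)) := by
          refine Finset.sum_congr rfl fun i _ => ?_
          exact Fin.sum_univ_eq_sum_range (fun j =>
            if (i : ℕ) = j then 0 else x ((i : ℕ)+1) * x (j+1) *
              min (x ((i : ℕ)+1)) (x (j+1))) n
      _ = _ := Fin.sum_univ_eq_sum_range (fun i => ∑ j ∈ Finset.range n,
          if i = j then 0 else x (i+1) * x (j+1) * min (x (i+1)) (x (j+1))) n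
  have h3 := Sfin_card_le G
  have h4 := double_count n x hdec
  -- combine in ℕ
  have hN : Nat.card P ≤ 2 * ∑ i ∈ Finset.range n, ∑ j ∈ Finset.range n,
      if i < j then x (i+1) * x (j+1) ^ 2 else 0 := by
    rw [← h4, ← h2]
    exact h1.trans h3
  -- Step 3: RHS as cast of ℕ sum
  have hR : (∑ i ∈ Finset.Icc 1 n, ∑ j ∈ Finset.Icc 1 n,
        if i < j then (x i : ℝ) * (x j : ℝ) ^ 2 else 0) =
      ((∑ i ∈ Finset.range n, ∑ j ∈ Finset.range n,
        if i < j then x (i+1) * x (j+1) ^ 2 else 0 : ℕ) : ℝ) := by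
    push_cast [apply_ite (Nat.cast : ℕ → ℝ)]
    simp only [← Finset.Ico_add_one_right_eq_Icc, Finset.sum_Ico_eq_sum_range, Nat.add_sub_cancel]
    refine Finset.sum_congr (by norm_num) fun i hi => ?_
    refine Finset.sum_congr (by norm_num) fun j hj => ?_
    have : (1 + i < 1 + j) ↔ i < j := by omega
    simp only [this, add_comm 1, Nat.add_lt_add_iff_right]
  rw [div_le_iff₀ (by norm_num : (0:ℝ) < 2), hR]
  calc (Nat.card P : ℝ) ≤ ((2 * ∑ i ∈ Finset.range n, ∑ j ∈ Finset.range n,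
        if i < j then x (i+1) * x (j+1) ^ 2 else 0 : ℕ) : ℝ) := by exact_mod_cast hN
    _ = _ := by push_cast; ring
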